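/- Let T be a tournament with n vertices and skew-adjacency matrix S_T. If n is odd, then det(S_T) = 0, and if n is even, then det(S_T) is the square of an odd integer. -/

import Mathlib

open scoped Classical

/-- A tournament: irreflexive, and between distinct vertices exactly one arc. -/
def IsTournament {V : Type*} (r : V → V → Prop) : Prop :=
  (∀ i, ¬ r i i) ∧ ∀ i j, i ≠ j → (r i j ↔ ¬ r j i)

/-- Skew-adjacency matrix of a relation. -/
noncomputable def skew {V : Type*} (r : V → V → Prop) : Matrix V V ℤ :=
  Matrix.of fun i j => if r i j then 1 else if r j i then -1 else 0

/-- Determinant of the skew-adjacency matrix. -/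
noncomputable def tdet {V : Type*} [Fintype V] [DecidableEq V] (r : V → V → Prop) : ℤ :=
  (skew r).det

/-- Determinant of the subtournament induced by a finite vertex subset. -/
noncomputable def subdet {V : Type*} [Fintype V] [DecidableEq V] (r : V → V → Prop)
    (s : Finset V) : ℤ :=
  ((skew r).submatrix (fun x : {x // x ∈ s} => x.1) (fun x : {x // x ∈ s} => x.1)).det

/-- Switch of `r` with respect to `W`: arcs between `W` and its complement are reversed. -/
def switchRel {V : Type*} (r : V → V → Prop) (W : Set V) : V → V → Prop :=
  fun i j => if (i ∈ W ↔ j ∈ W) then r i j else r j i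

/-- Switching equivalence of two tournaments on the same vertex set. -/
def SwitchEquiv {V : Type*} (r₁ r₂ : V → V → Prop) : Prop :=
  ∃ W : Set V, ∀ i j, r₂ i j ↔ switchRel r₁ W i j

def IsTransitive {V : Type*} (r : V → V → Prop) : Prop :=
  ∀ a b c, r a b → r b c → r a c

def IsTransitiveOn {V : Type*} (r : V → V → Prop) (X : Finset V) : Prop :=
  ∀ a ∈ X, ∀ b ∈ X, ∀ c ∈ X, r a b → r b c → r a c

/-- A 4-set inducing a diamond: a vertex dominating or dominated by a 3-cycle. -/
def IsDiamond {V : Type*} (r : V → V → Prop) (X : Finset V) : Prop :=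
  ∃ a b c d : V, X = {a, b, c, d} ∧ a ≠ b ∧ a ≠ c ∧ a ≠ d ∧ b ≠ c ∧ b ≠ d ∧ c ≠ d ∧
    r b c ∧ r c d ∧ r d b ∧ ((r a b ∧ r a c ∧ r a d) ∨ (r b a ∧ r c a ∧ r d a))

/-- Number of diamonds of a tournament. -/
noncomputable def numDiamonds {V : Type*} [Fintype V] (r : V → V → Prop) : ℕ :=
  Set.ncard {X : Finset V | IsDiamond r X}

/-- The tournament `L_n`: a transitive chain `u_0 → ⋯ → u_{n-2}` together with a last
vertex alternating along the chain, starting with `u_{n-1} → u_0`. -/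
def LRel (n : ℕ) : Fin n → Fin n → Prop := fun i j =>
  (j.val < n - 1 ∧ i.val < j.val) ∨
  (j.val = n - 1 ∧ i.val < n - 1 ∧ i.val % 2 = 1) ∨
  (i.val = n - 1 ∧ j.val < n - 1 ∧ j.val % 2 = 0)

/-- Join of two tournaments: all arcs from the first to the second. -/
def joinRel {A B : Type*} (r : A → A → Prop) (s : B → B → Prop) : A ⊕ B → A ⊕ B → Prop :=
  fun x y => match x, y with
  | .inl a, .inl a' => r a a'
  | .inr b, .inr b' => s b b'
  | .inl _, .inr _ => True
  | .inr _, .inl _ => False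

/-- `T⁺`: add one new vertex dominated by every vertex of `T`. -/
def plusRel {A : Type*} (r : A → A → Prop) : Option A → Option A → Prop :=
  fun x y => match x, y with
  | some a, some b => r a b
  | some _, none => True
  | _, _ => False

/-- Blowup of `r` by the family of tournaments `t`. -/
def blowupG {ι : Type*} [DecidableEq ι] (r : ι → ι → Prop) {κ : ι → Type*}
    (t : ∀ i, κ i → κ i → Prop) : (Σ i, κ i) → (Σ i, κ i) → Prop :=
  fun x y => if h : x.1 = y.1 then t y.1 (h ▸ x.2) y.2 else r x.1 y.1

/-- Transitive `(a_1,…,a_n)`-blowup of `r`. -/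
def blowup {ι : Type*} [DecidableEq ι] (r : ι → ι → Prop) (a : ι → ℕ) :
    (Σ i, Fin (a i)) → (Σ i, Fin (a i)) → Prop :=
  blowupG r (fun _ p q => p < q)

/-- Membership in `𝒟_k`: every subtournament has determinant at most `k²`. -/
def memD {V : Type*} [Fintype V] [DecidableEq V] (r : V → V → Prop) (k : ℕ) : Prop :=
  ∀ s : Finset V, subdet r s ≤ (k : ℤ) ^ 2

open Matrix in
/-- A skew-symmetric matrix over `ℚ` of even size has square determinant. -/
lemma skew_det_sq : ∀ (n : ℕ), Even n → ∀ (A : Matrix (Fin n) (Fin n) ℚ),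
    Aᵀ = -A → ∃ r : ℚ, A.det = r ^ 2 := by
  intro n
  induction n using Nat.strong_induction_on with
  | _ n ih =>
  intro hev A hA
  rcases eq_or_ne n 0 with h0 | h0
  · subst h0; exact ⟨1, by simp⟩
  by_cases hdet : A.det = 0
  · exact ⟨0, by simp [hdet]⟩
  have hn2 : 2 ≤ n := by
    rcases hev with ⟨k, hk⟩; omega
  have hdiag : ∀ i, A i i = 0 := by
    intro i
    have := congrFun (congrFun hA i) i
    simp only [Matrix.transpose_apply, Matrix.neg_apply] at this
    linarith
  set i0 : Fin n := ⟨0, by omega⟩ with hi0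
  set i1 : Fin n := ⟨1, by omega⟩ with hi1
  have hi01 : i0 ≠ i1 := by simp [hi0, hi1, Fin.ext_iff]
  have hrow : ∃ j, A i0 j ≠ 0 := by
    by_contra h
    push_neg at h
    exact hdet (Matrix.det_eq_zero_of_row_eq_zero i0 h)
  obtain ⟨j, hj⟩ := hrow
  have hji0 : i0 ≠ j := by rintro rfl; exact hj (hdiag _)
  set σ : Equiv.Perm (Fin n) := Equiv.swap i1 j with hσ
  set A' := A.submatrix σ σ with hA'def
  have hA'skew : A'ᵀ = -A' := by
    ext i k
    have := congrFun (congrFun hA (σ i)) (σ k)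
    simpa [hA'def] using this
  have hA'diag : ∀ i, A' i i = 0 := fun i => hdiag _
  have hA'det : A'.det = A.det := Matrix.det_submatrix_equiv_self σ A
  have ha : A' i0 i1 ≠ 0 := by
    have h1 : σ i0 = i0 := Equiv.swap_apply_of_ne_of_ne hi01 hji0
    have h2 : σ i1 = j := Equiv.swap_apply_left _ _
    simpa [hA'def, Matrix.submatrix_apply, h1, h2] using hj
  -- reindex to a block structure
  have hmn : 2 + (n - 2) = n := by omega
  set e : Fin 2 ⊕ Fin (n - 2) ≃ Fin n := finSumFinEquiv.trans (finCongr hmn) with he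
  set B := A'.submatrix e e with hB
  have hBskew : Bᵀ = -B := by
    ext i k
    have := congrFun (congrFun hA'skew (e i)) (e k)
    simpa [hB] using this
  have hBdet : B.det = A'.det := Matrix.det_submatrix_equiv_self e A'
  have he0 : e (Sum.inl 0) = i0 := by
    simp [he, Fin.ext_iff, finSumFinEquiv, hi0]
  have he1 : e (Sum.inl 1) = i1 := by
    simp [he, Fin.ext_iff, finSumFinEquiv, hi1]
  set B11 := B.toBlocks₁₁ with hB11
  set B12 := B.toBlocks₁₂ with hB12
  set B21 := B.toBlocks₂₁ with hB21
  set B22 := B.toBlocks₂₂ with hB22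
  have hBentry : ∀ i k, Bᵀ i k = -(B i k) := fun i k => by
    rw [hBskew]; rfl
  have hs11 : B11ᵀ = -B11 := by
    ext i k
    simpa [hB11, Matrix.toBlocks₁₁] using hBentry (Sum.inl i) (Sum.inl k)
  have hs22 : B22ᵀ = -B22 := by
    ext i k
    simpa [hB22, Matrix.toBlocks₂₂] using hBentry (Sum.inr i) (Sum.inr k)
  have hs12 : B12ᵀ = -B21 := by
    ext i k
    simpa [hB12, hB21, Matrix.toBlocks₁₂, Matrix.toBlocks₂₁] using
      hBentry (Sum.inr i) (Sum.inl k)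
  have hs21 : B21ᵀ = -B12 := by
    ext i k
    simpa [hB12, hB21, Matrix.toBlocks₁₂, Matrix.toBlocks₂₁] using
      hBentry (Sum.inl i) (Sum.inr k)
  set a := B11 0 1 with haa
  have haB : a = A' i0 i1 := by
    simp [haa, hB11, Matrix.toBlocks₁₁, hB, he0, he1]
  have ha0 : a ≠ 0 := haB ▸ ha
  have hB1100 : B11 0 0 = 0 := by
    simp [hB11, Matrix.toBlocks₁₁, hB, he0, hA'diag]
  have hB1111 : B11 1 1 = 0 := by
    simp [hB11, Matrix.toBlocks₁₁, hB, he1, hA'diag]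
  have hB1110 : B11 1 0 = -a := by
    have := congrFun (congrFun hs11 1) 0
    simp only [Matrix.transpose_apply, Matrix.neg_apply] at this
    rw [haa]
    linarith
  have hdet11 : B11.det = a ^ 2 := by
    rw [Matrix.det_fin_two, hB1100, hB1111, hB1110]
    ring
  haveI : Invertible B11 :=
    B11.invertibleOfIsUnitDet (by rw [hdet11]; exact isUnit_iff_ne_zero.2 (pow_ne_zero 2 ha0))
  -- inverse transpose
  have hinvT : (⅟B11)ᵀ = -⅟B11 := by
    have h1 : B11 * (-(⅟B11)ᵀ) = 1 := by
      have : (⅟B11 * B11)ᵀ = (1 : Matrix (Fin 2) (Fin 2) ℚ) := by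
        rw [invOf_mul_self]; simp
      rw [Matrix.transpose_mul, hs11] at this
      calc B11 * (-(⅟B11)ᵀ) = -B11 * (⅟B11)ᵀ := by
            rw [Matrix.mul_neg, Matrix.neg_mul]
        _ = 1 := this
    have h2 := invOf_eq_right_inv h1
    ext i k
    have h3 := congrFun (congrFun h2 k) i
    simp only [Matrix.neg_apply, Matrix.transpose_apply] at h3 ⊢
    linarith
  set S := B22 - B21 * ⅟B11 * B12 with hS
  have hSskew : Sᵀ = -S := by
    rw [hS, Matrix.transpose_sub, hs22, Matrix.transpose_mul, Matrix.transpose_mul,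
      hinvT, hs12, hs21]
    simp only [Matrix.neg_mul, Matrix.mul_neg, neg_neg, Matrix.mul_assoc, neg_sub,
      sub_eq_add_neg, neg_add, neg_neg]
  obtain ⟨r, hr⟩ := ih (n - 2) (by omega) (by rcases hev with ⟨k, hk⟩; exact ⟨k - 1, by omega⟩) S hSskew
  refine ⟨a * r, ?_⟩
  have : B.det = B11.det * S.det := by
    rw [← Matrix.fromBlocks_toBlocks B, Matrix.det_fromBlocks₁₁]
  rw [← hA'det, ← hBdet, this, hdet11, hr]
  ring

open Matrix in
theorem stmt0 {V : Type*} [Fintype V] [DecidableEq V] (r : V → V → Prop)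
    (hT : IsTournament r) :
    (Odd (Fintype.card V) → tdet r = 0) ∧
    (Even (Fintype.card V) → ∃ m : ℤ, Odd m ∧ tdet r = m ^ 2) := by
  classical
  simp only [tdet]
  set M := skew r with hM
  have hskew : Mᵀ = -M := by
    ext i k
    rcases eq_or_ne i k with rfl | hik
    · simp [hM, skew, hT.1 i]
    · have := hT.2 i k hik
      by_cases h : r i k
      · simp [hM, skew, h, (this.1 h)]
      · have h2 : r k i := by
          by_contra h3
          exact h ((hT.2 i k hik).2 h3)
        simp [hM, skew, h, h2, (hT.1 k)]
  constructor
  · intro hodd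
    have h1 : M.det = (-1) ^ Fintype.card V * M.det := by
      conv_lhs => rw [← Matrix.det_transpose M, hskew, Matrix.det_neg]
    rw [hodd.neg_one_pow] at h1
    linarith
  · intro heven
    -- determinant is odd
    have hodd : Odd M.det := by
      have hmap : M.map (Int.cast : ℤ → ZMod 2) =
          1 + Matrix.replicateCol Unit (fun _ : V => (1 : ZMod 2)) *
            Matrix.replicateRow Unit (fun _ : V => (1 : ZMod 2)) := by
        ext i k
        rcases eq_or_ne i k with rfl | hik
        · simp [hM, skew, hT.1 i, Matrix.one_apply, Matrix.mul_apply, Matrix.add_apply,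
            Matrix.replicateCol_apply, Matrix.replicateRow_apply]
          decide
        · have := hT.2 i k hik
          by_cases h : r i k
          · simp [hM, skew, h, Matrix.one_apply, hik, Matrix.mul_apply, Matrix.add_apply,
              Matrix.replicateCol_apply, Matrix.replicateRow_apply]
          · have h2 : r k i := by
              by_contra h3
              exact h ((hT.2 i k hik).2 h3)
            simp [hM, skew, h, h2, Matrix.one_apply, hik, Matrix.mul_apply, Matrix.add_apply,
              Matrix.replicateCol_apply, Matrix.replicateRow_apply]
      have hdet2 : ((M.det : ZMod 2)) = 1 := by
        have h0 := RingHom.map_det (Int.castRingHom (ZMod 2)) M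
        rw [RingHom.mapMatrix_apply] at h0
        show (Int.castRingHom (ZMod 2)) M.det = 1
        rw [h0]
        have h1 : M.map (Int.castRingHom (ZMod 2)) = M.map (Int.cast : ℤ → ZMod 2) := rfl
        rw [h1, hmap, Matrix.det_one_add_replicateCol_mul_replicateRow]
        have hcard : ((Fintype.card V : ℕ) : ZMod 2) = 0 := by
          rw [ZMod.natCast_eq_zero_iff]
          exact heven.two_dvd
        simp [dotProduct, hcard, Finset.card_univ]
      rw [Int.odd_iff]
      by_contra h
      have h2 : ((2 : ℕ) : ℤ) ∣ M.det := Int.dvd_of_emod_eq_zero (by omega)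
      rw [← ZMod.intCast_zmod_eq_zero_iff_dvd] at h2
      rw [hdet2] at h2
      exact one_ne_zero h2
    -- determinant is a square
    set n := Fintype.card V with hn
    set eV := Fintype.equivFin V with heV
    set Aq : Matrix (Fin n) (Fin n) ℚ :=
      (M.map (Int.cast : ℤ → ℚ)).submatrix eV.symm eV.symm with hAq
    have hAqskew : Aqᵀ = -Aq := by
      ext i k
      have := congrFun (congrFun hskew (eV.symm i)) (eV.symm k)
      simp only [Matrix.transpose_apply, Matrix.neg_apply] at this
      simp only [hAq, Matrix.transpose_apply, Matrix.neg_apply, Matrix.submatrix_apply,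
        Matrix.map_apply, this]
      push_cast
      ring
    have hAqdet : Aq.det = (M.det : ℚ) := by
      rw [hAq, Matrix.det_submatrix_equiv_self]
      have h0 := RingHom.map_det (Int.castRingHom ℚ) M
      rw [RingHom.mapMatrix_apply] at h0
      exact h0.symm
    obtain ⟨s, hs⟩ := skew_det_sq n (hn ▸ heven) Aq hAqskew
    have hsq : ((s : ℝ)) ^ 2 = ((M.det : ℤ) : ℝ) := by
      have : ((Aq.det : ℚ) : ℝ) = ((M.det : ℚ) : ℝ) := by rw [hAqdet]
      rw [hs] at this
      rw [Rat.cast_pow, Rat.cast_intCast] at this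
      linarith
    have hint : ∃ y : ℤ, (s : ℝ) = y := by
      by_contra h
      have := irrational_nrt_of_notint_nrt 2 M.det hsq h (by norm_num)
      exact this ⟨s, rfl⟩
    obtain ⟨y, hy⟩ := hint
    have hdet : M.det = y ^ 2 := by
      have : ((M.det : ℤ) : ℝ) = ((y ^ 2 : ℤ) : ℝ) := by
        rw [← hsq, hy]; push_cast; ring
      exact_mod_cast this
    refine ⟨y, ?_, hdet⟩
    rcases Int.even_or_odd y with he | ho
    · exfalso
      rw [hdet] at hodd
      rw [← Int.not_even_iff_odd] at hodd
      exact hodd (by rw [sq]; exact he.mul_right y)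
    · exact ho
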